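/- Let p,q,r,s,u,v,x,y,z,a,b,c be real numbers, and set A₁ = diag(p,q,r), A₂ = diag(s,u,v), A₃ = diag(x,y,z), B₁₂ = a·E₁₂, B₁₃ = b·E₁₃, B₂₃ = c·E₂₃ (3×3 real matrices). Then the combination T_J := {A₁,A₂,A₃} − {A₁,B₂₃,B₂₃ᵀ} − {A₂,B₁₃,B₁₃ᵀ} − {A₃,B₁₂,B₁₂ᵀ} + {B₁₃,B₁₂ᵀ,B₂₃ᵀ} + {B₁₃ᵀ,B₁₂,B₂₃} − {A₁,A₂} − {A₁,A₃} − {A₂,A₃} + {B₁₂,B₁₂ᵀ} + {B₁₃,B₁₃ᵀ} + {B₂₃,B₂₃ᵀ} equals the diagonal matrix diag(6psx − b²(2s+v−1) − a²(2x+y−1) + 2abc − 2(ps+sx+px), 6quy − c²(2q+r−1) − a²(x+2y−1) + 2abc − 2(qu+uy+qy), 6rvz − c²(q+2r−1) − b²(s+2v−1) + 2abc − 2(rv+vz+rz)). -/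

import Mathlib

open Matrix

/-- The full symmetrizer {X,Y,Z} = sum over all six orderings. -/
def sym3 {m : Type*} [Fintype m] [DecidableEq m] (X Y Z : Matrix m m ℝ) : Matrix m m ℝ :=
  X * Y * Z + X * Z * Y + Y * X * Z + Y * Z * X + Z * X * Y + Z * Y * X

/-- The anticommutator {X,Y} = XY + YX. -/
def sym2 {m : Type*} [Fintype m] [DecidableEq m] (X Y : Matrix m m ℝ) : Matrix m m ℝ :=
  X * Y + Y * X

/-- The pointwise matrix form of the vector bundle J-equation in dimension three. -/
def TJ {m : Type*} [Fintype m] [DecidableEq m]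
    (A₁ A₂ A₃ B₁₂ B₁₃ B₂₃ : Matrix m m ℝ) : Matrix m m ℝ :=
  sym3 A₁ A₂ A₃ - sym3 A₁ B₂₃ B₂₃ᵀ - sym3 A₂ B₁₃ B₁₃ᵀ - sym3 A₃ B₁₂ B₁₂ᵀ
    + sym3 B₁₃ B₁₂ᵀ B₂₃ᵀ + sym3 B₁₃ᵀ B₁₂ B₂₃
    - sym2 A₁ A₂ - sym2 A₁ A₃ - sym2 A₂ A₃
    + sym2 B₁₂ B₁₂ᵀ + sym2 B₁₃ B₁₃ᵀ + sym2 B₂₃ B₂₃ᵀ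

set_option maxHeartbeats 2000000 in
theorem stmt11 (p q r s u v x y z a b c : ℝ) :
    TJ (Matrix.diagonal ![p, q, r]) (Matrix.diagonal ![s, u, v])
      (Matrix.diagonal ![x, y, z])
      (a • Matrix.single (0 : Fin 3) (1 : Fin 3) (1 : ℝ))
      (b • Matrix.single (0 : Fin 3) (2 : Fin 3) (1 : ℝ))
      (c • Matrix.single (1 : Fin 3) (2 : Fin 3) (1 : ℝ)) =
    Matrix.diagonal
      ![6 * p * s * x - b ^ 2 * (2 * s + v - 1) - a ^ 2 * (2 * x + y - 1)
          + 2 * a * b * c - 2 * (p * s + s * x + p * x),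
        6 * q * u * y - c ^ 2 * (2 * q + r - 1) - a ^ 2 * (x + 2 * y - 1)
          + 2 * a * b * c - 2 * (q * u + u * y + q * y),
        6 * r * v * z - c ^ 2 * (q + 2 * r - 1) - b ^ 2 * (s + 2 * v - 1)
          + 2 * a * b * c - 2 * (r * v + v * z + r * z)] := by
  have hd : ∀ p q r : ℝ, Matrix.diagonal ![p, q, r] = !![p,0,0; 0,q,0; 0,0,r] := by
    intro p q r
    ext i j
    fin_cases i <;> fin_cases j <;> simp [Matrix.diagonal, Matrix.vecHead, Matrix.vecTail]
  have hA : ∀ t : ℝ, t • Matrix.single (0 : Fin 3) (1 : Fin 3) (1 : ℝ) = !![0,t,0; 0,0,0; 0,0,0] := by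
    intro t; ext i j
    fin_cases i <;> fin_cases j <;> simp [Matrix.single, Matrix.vecHead, Matrix.vecTail]
  have hB : ∀ t : ℝ, t • Matrix.single (0 : Fin 3) (2 : Fin 3) (1 : ℝ) = !![0,0,t; 0,0,0; 0,0,0] := by
    intro t; ext i j
    fin_cases i <;> fin_cases j <;> simp [Matrix.single, Matrix.vecHead, Matrix.vecTail]
  have hC : ∀ t : ℝ, t • Matrix.single (1 : Fin 3) (2 : Fin 3) (1 : ℝ) = !![0,0,0; 0,0,t; 0,0,0] := by
    intro t; ext i j
    fin_cases i <;> fin_cases j <;> simp [Matrix.single, Matrix.vecHead, Matrix.vecTail]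
  have hTA : ∀ t : ℝ, (!![0,t,0; 0,0,0; 0,0,0] : Matrix (Fin 3) (Fin 3) ℝ)ᵀ
      = !![0,0,0; t,0,0; 0,0,0] := by
    intro t; ext i j
    fin_cases i <;> fin_cases j <;> simp [Matrix.vecHead, Matrix.vecTail]
  have hTB : ∀ t : ℝ, (!![0,0,t; 0,0,0; 0,0,0] : Matrix (Fin 3) (Fin 3) ℝ)ᵀ
      = !![0,0,0; 0,0,0; t,0,0] := by
    intro t; ext i j
    fin_cases i <;> fin_cases j <;> simp [Matrix.vecHead, Matrix.vecTail]
  have hTC : ∀ t : ℝ, (!![0,0,0; 0,0,t; 0,0,0] : Matrix (Fin 3) (Fin 3) ℝ)ᵀ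
      = !![0,0,0; 0,0,0; 0,t,0] := by
    intro t; ext i j
    fin_cases i <;> fin_cases j <;> simp [Matrix.vecHead, Matrix.vecTail]
  rw [hd, hd, hd, hA, hB, hC, TJ]
  unfold sym3 sym2
  rw [hTA, hTB, hTC]
  simp only [Matrix.mul_fin_three]
  ext i j
  fin_cases i <;> fin_cases j <;>
    simp [Matrix.diagonal, Matrix.vecHead, Matrix.vecTail] <;> ring
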